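/- arXiv:2104.10225 — 2 statements merged into one kernel-verified Lean document; each statement's English description precedes it below -/
import Mathlib

section
/- Let $(w_t)$ be a Brownian motion on $[0,T]$ with natural filtration, and suppose $\xi_t = \mathbb{E}[\xi_t] + \int_0^T g_{t,s}\,dw_s$ and $\zeta_t = \mathbb{E}[\zeta_t] + \int_0^T h_{t,s}\,dw_s$ with $g_t, h_t$ progressively measurable square-integrable, where $\xi_t = \xi_0 + \int_0^t \zeta_r\,dr$. Then for each $t\in[0,T]$, $g_{t,\cdot} = g_{0,\cdot} + \int_0^t h_{r,\cdot}\,dr$ as elements of $L^2(\Omega\times[0,T])$; in particular, for almost every $s$ the map $t \mapsto g_{t,s}$ has a continuous modification. -/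
open MeasureTheory ProbabilityTheory Filter Set

variable {Ω : Type*}

/-- `w` is a standard Brownian motion with respect to the filtration `F`
on the probability space `(Ω, P)`. -/
structure IsBM {mΩ : MeasurableSpace Ω} (P : Measure Ω) (F : Filtration ℝ mΩ)
    (w : ℝ → Ω → ℝ) : Prop where
  adapted : Adapted F w
  cont : ∀ ω, Continuous fun t => w t ω
  start : ∀ᵐ ω ∂P, w 0 ω = 0
  indep : ∀ s t : ℝ, 0 ≤ s → s ≤ t →
    Indep (MeasurableSpace.comap (fun ω => w t ω - w s ω) inferInstance) (F s) P
  gauss : ∀ s t : ℝ, 0 ≤ s → s ≤ t →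
    Measure.map (fun ω => w t ω - w s ω) P = gaussianReal 0 (Real.toNNReal (t - s))

/-- A process `v` is square integrable on `[0,T] × Ω`, i.e. `𝔼 ∫_0^T v_s² ds < ∞`. -/
def SqInt {mΩ : MeasurableSpace Ω} (P : Measure Ω) (T : ℝ) (v : ℝ → Ω → ℝ) : Prop :=
  Integrable (fun p : ℝ × Ω => (v p.1 p.2)^2) ((volume.restrict (Set.Ioc 0 T)).prod P)

/-- An abstract Itô stochastic integral operator for the Brownian motion `w` on `[0,T]`:
`toFun v t` represents `∫_0^t v_s dw_s`.  The listed properties (values on elementary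
predictable integrands, linearity, the Itô isometry, square integrability and the
martingale property) characterize the Itô integral of progressively measurable
square-integrable integrands uniquely up to null sets. -/
structure ItoIntegral {mΩ : MeasurableSpace Ω} (P : Measure Ω) (F : Filtration ℝ mΩ)
    (w : ℝ → Ω → ℝ) (T : ℝ) where
  toFun : (ℝ → Ω → ℝ) → ℝ → Ω → ℝ
  elem : ∀ (a b : ℝ) (X : Ω → ℝ), 0 ≤ a → a ≤ b → b ≤ T →
    StronglyMeasurable[F a] X → MemLp X 2 P →
    ∀ t ω, toFun (fun s ω' => if s ∈ Set.Ioc a b then X ω' else 0) t ω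
      = X ω * (w (min t b) ω - w (min t a) ω)
  add : ∀ u v : ℝ → Ω → ℝ, ProgMeasurable F u → SqInt P T u →
    ProgMeasurable F v → SqInt P T v → ∀ t : ℝ,
      toFun (fun s ω => u s ω + v s ω) t =ᵐ[P] fun ω => toFun u t ω + toFun v t ω
  smul : ∀ (c : ℝ) (v : ℝ → Ω → ℝ), ProgMeasurable F v → SqInt P T v → ∀ t : ℝ,
      toFun (fun s ω => c * v s ω) t =ᵐ[P] fun ω => c * toFun v t ω
  isometry : ∀ v : ℝ → Ω → ℝ, ProgMeasurable F v → SqInt P T v → ∀ t ∈ Set.Icc (0:ℝ) T,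
      ∫ ω, (toFun v t ω)^2 ∂P
        = ∫ p, (v p.1 p.2)^2 ∂((volume.restrict (Set.Ioc 0 t)).prod P)
  sqIntegrable : ∀ v : ℝ → Ω → ℝ, ProgMeasurable F v → SqInt P T v → ∀ t : ℝ,
      MemLp (toFun v t) 2 P
  martingale : ∀ v : ℝ → Ω → ℝ, ProgMeasurable F v → SqInt P T v →
    ∀ s t : ℝ, 0 ≤ s → s ≤ t → t ≤ T → P[toFun v t|F s] =ᵐ[P] toFun v s
  start : ∀ v : ℝ → Ω → ℝ, toFun v 0 =ᵐ[P] fun _ => 0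


section Helpers
variable {α : Type*} {β : Type*}


section helpers
variable {mα : MeasurableSpace α} {mβ : MeasurableSpace β} {μ : Measure α} {ν : Measure β}

lemma integrable_of_sq [IsFiniteMeasure μ] {f : α → ℝ} (hm : AEStronglyMeasurable f μ)
    (h2 : Integrable (fun x => f x ^ 2) μ) : Integrable f μ :=
  ((memLp_two_iff_integrable_sq hm).2 h2).integrable one_le_two

lemma integrable_mul_of_sq {f g : α → ℝ} (hfm : AEStronglyMeasurable f μ)
    (hgm : AEStronglyMeasurable g μ)
    (hf : Integrable (fun x => f x ^ 2) μ) (hg : Integrable (fun x => g x ^ 2) μ) :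
    Integrable (fun x => f x * g x) μ := by
  refine Integrable.mono' (((hf.add hg).div_const 2)) (hfm.mul hgm) ?_
  filter_upwards with x
  rw [Real.norm_eq_abs, abs_mul]
  simp only [Pi.add_apply]
  nlinarith [sq_abs (f x), sq_abs (g x), sq_nonneg (|f x| - |g x|), abs_nonneg (f x), abs_nonneg (g x)]

lemma integrable_comp_snd [IsFiniteMeasure ν] [SFinite μ] {f : α → ℝ} (hf : Integrable f μ) :
    Integrable (fun q : β × α => f q.2) (ν.prod μ) := by
  have h1 : Integrable f (Measure.map Prod.snd (ν.prod μ)) := by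
    rw [Measure.map_snd_prod]
    exact hf.smul_measure (measure_ne_top ν univ)
  have hm : AEStronglyMeasurable f (Measure.map Prod.snd (ν.prod μ)) := h1.aestronglyMeasurable
  exact (integrable_map_measure hm measurable_snd.aemeasurable).1 h1

lemma aesm_comp_snd [SFinite μ] [SFinite ν] {f : α → ℝ} (hf : AEStronglyMeasurable f μ) :
    AEStronglyMeasurable (fun q : β × α => f q.2) (ν.prod μ) :=
  hf.comp_quasiMeasurePreserving Measure.quasiMeasurePreserving_snd

lemma sq_integral_le [IsFiniteMeasure μ] {f : α → ℝ} (hm : AEStronglyMeasurable f μ)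
    (h2 : Integrable (fun x => f x ^ 2) μ) :
    (∫ x, f x ∂μ)^2 ≤ (μ univ).toReal * ∫ x, f x ^ 2 ∂μ := by
  set a := (μ univ).toReal with ha_def
  have ha : 0 ≤ a := ENNReal.toReal_nonneg
  have hf1 : Integrable f μ := integrable_of_sq hm h2
  set m := ∫ x, f x ∂μ with hm_def
  have key : 0 ≤ ∫ x, (a * f x - m)^2 ∂μ := integral_nonneg (fun x => sq_nonneg _)
  have expand : ∫ x, (a * f x - m)^2 ∂μ
      = a^2 * (∫ x, f x ^ 2 ∂μ) - a * m^2 := by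
    have e1 : ∀ x, (a * f x - m)^2 = a^2 * f x^2 - (2*a*m) * f x + m^2 := fun x => by ring
    simp_rw [e1]
    have i1 : Integrable (fun x => a ^ 2 * f x ^ 2 - 2 * a * m * f x) μ :=
      (h2.const_mul _).sub (hf1.const_mul _)
    rw [integral_add i1 (integrable_const _),
      integral_sub (h2.const_mul _) (hf1.const_mul _), integral_const_mul, integral_const_mul,
      integral_const, smul_eq_mul, ← hm_def, measureReal_def, ← ha_def]
    ring
  rw [expand] at key
  rcases eq_or_lt_of_le ha with h0 | hpos
  · have h0' : μ univ = 0 :=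
      ((ENNReal.toReal_eq_zero_iff _).1 h0.symm).resolve_right (measure_lt_top μ univ).ne
    have hμ : μ = 0 := Measure.measure_univ_eq_zero.1 h0'
    simp [hμ, hm_def]
  · nlinarith

end helpers



lemma progMeas_aesm {mΩ : MeasurableSpace Ω} {P : Measure Ω} [SFinite P] {F : Filtration ℝ mΩ}
    (T : ℝ) {u : ℝ → Ω → ℝ} (hu : ProgMeasurable F u) :
    AEStronglyMeasurable (fun p : ℝ × Ω => u p.1 p.2)
      ((volume.restrict (Set.Ioc 0 T)).prod P) := by
  have h1 : Measurable fun p : ℝ × Ω => (⟨min p.1 T, Set.mem_Iic.2 (min_le_right _ _)⟩ : Set.Iic T) :=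
    (measurable_fst.min measurable_const).subtype_mk
  have h2 : @Measurable (ℝ × Ω) Ω _ (F T) Prod.snd :=
    measurable_snd.mono le_rfl (F.le T)
  have hψ : @Measurable (ℝ × Ω) (Set.Iic T × Ω) _ (Subtype.instMeasurableSpace.prod (F T))
      (fun p => (⟨min p.1 T, Set.mem_Iic.2 (min_le_right _ _)⟩, p.2)) :=
    Measurable.prod h1 h2
  have hsm : StronglyMeasurable fun p : ℝ × Ω => u (min p.1 T) p.2 :=
    (hu T).comp_measurable hψ
  refine hsm.aestronglyMeasurable.congr ?_
  have hmem : ∀ᵐ p : ℝ × Ω ∂((volume.restrict (Set.Ioc 0 T)).prod P), p.1 ∈ Set.Ioc 0 T := by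
    rw [Measure.restrict_prod_eq_prod_univ]
    exact (ae_restrict_mem (measurableSet_Ioc.prod MeasurableSet.univ)).mono fun p hp => hp.1
  filter_upwards [hmem] with p hp
  rw [min_eq_left hp.2]

end Helpers

lemma polarization {mΩ : MeasurableSpace Ω} (P : Measure Ω) [IsProbabilityMeasure P]
    (F : Filtration ℝ mΩ) (w : ℝ → Ω → ℝ) (T : ℝ) (hT : 0 < T)
    (SI : ItoIntegral P F w T) (u v : ℝ → Ω → ℝ)
    (hu : ProgMeasurable F u) (hu2 : SqInt P T u)
    (hv : ProgMeasurable F v) (hv2 : SqInt P T v) :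
    ∫ ω, SI.toFun u T ω * SI.toFun v T ω ∂P
      = ∫ p, u p.1 p.2 * v p.1 p.2 ∂((volume.restrict (Set.Ioc 0 T)).prod P) := by
  set μ := (volume.restrict (Set.Ioc 0 T)).prod P with hμ
  have hTmem : T ∈ Set.Icc (0:ℝ) T := ⟨hT.le, le_rfl⟩
  have hum : AEStronglyMeasurable (fun p : ℝ × Ω => u p.1 p.2) μ := progMeas_aesm T hu
  have hvm : AEStronglyMeasurable (fun p : ℝ × Ω => v p.1 p.2) μ := progMeas_aesm T hv
  have hcross : Integrable (fun p : ℝ × Ω => u p.1 p.2 * v p.1 p.2) μ :=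
    integrable_mul_of_sq hum hvm hu2 hv2
  have huv2 : SqInt P T (fun s ω => u s ω + v s ω) := by
    have e : (fun p : ℝ × Ω => (u p.1 p.2 + v p.1 p.2)^2)
        = fun p : ℝ × Ω => (u p.1 p.2)^2 + 2 * (u p.1 p.2 * v p.1 p.2) + (v p.1 p.2)^2 := by
      funext p; ring
    show Integrable _ _
    rw [e]
    exact (hu2.add (hcross.const_mul 2)).add hv2
  have iu := SI.isometry u hu hu2 T hTmem
  have iv := SI.isometry v hv hv2 T hTmem
  have isum := SI.isometry _ (IsStronglyProgressive.add hu hv) huv2 T hTmem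
  set X := SI.toFun u T with hX_def
  set Y := SI.toFun v T with hY_def
  have hX : MemLp X 2 P := SI.sqIntegrable u hu hu2 T
  have hY : MemLp Y 2 P := SI.sqIntegrable v hv hv2 T
  have hXY : Integrable (fun ω => X ω * Y ω) P :=
    integrable_mul_of_sq hX.aestronglyMeasurable hY.aestronglyMeasurable
      hX.integrable_sq hY.integrable_sq
  have huvT := SI.add u v hu hu2 hv hv2 T
  have lhs_eq : ∫ ω, (SI.toFun (fun s ω => u s ω + v s ω) T ω)^2 ∂P
      = ∫ ω, ((X ω)^2 + 2 * (X ω * Y ω) + (Y ω)^2) ∂P := by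
    refine integral_congr_ae ?_
    filter_upwards [huvT] with ω hω
    rw [hω]; ring
  have rhs_eq : ∫ p, (u p.1 p.2 + v p.1 p.2)^2 ∂μ
      = ∫ p, ((u p.1 p.2)^2 + 2 * (u p.1 p.2 * v p.1 p.2) + (v p.1 p.2)^2) ∂μ := by
    refine integral_congr_ae ?_
    filter_upwards with p
    ring
  rw [lhs_eq, rhs_eq] at isum
  have iP1 : Integrable (fun ω => X ω ^ 2 + 2 * (X ω * Y ω)) P :=
    hX.integrable_sq.add (hXY.const_mul 2)
  have iμ1 : Integrable (fun p : ℝ × Ω => (u p.1 p.2)^2 + 2 * (u p.1 p.2 * v p.1 p.2)) μ :=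
    hu2.add (hcross.const_mul 2)
  rw [integral_add iP1 hY.integrable_sq, integral_add hX.integrable_sq (hXY.const_mul 2),
    integral_const_mul] at isum
  rw [integral_add iμ1 hv2, integral_add hu2 (hcross.const_mul 2), integral_const_mul] at isum
  rw [← hμ] at iu iv
  linarith


/-- Given `ξ_t = ξ_0 + ∫_0^t ζ_r dr` with Itô representations
`ξ_t = 𝔼ξ_t + ∫_0^T g_{t,s} dw_s` and `ζ_t = 𝔼ζ_t + ∫_0^T h_{t,s} dw_s`, for each
`t ∈ [0,T]` one has `g_{t,·} = g_{0,·} + ∫_0^t h_{r,·} dr` as elements of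
`L²(Ω × [0,T])`; in particular, for almost every `s` the map `t ↦ g_{t,s}` has a
continuous modification. -/
theorem representation_kernel_regularity
    {mΩ : MeasurableSpace Ω} (P : Measure Ω) [IsProbabilityMeasure P]
    (F : Filtration ℝ mΩ) (w : ℝ → Ω → ℝ) (T : ℝ) (hT : 0 < T)
    (hw : IsBM P F w) (SI : ItoIntegral P F w T)
    (ξ ζ : ℝ → Ω → ℝ)
    (hζm : Measurable (Function.uncurry ζ)) (hζ2 : SqInt P T ζ)
    (hξ0 : MemLp (ξ 0) 2 P)
    (hξ : ∀ ω : Ω, ∀ t ∈ Set.Icc (0:ℝ) T, ξ t ω = ξ 0 ω + ∫ r in (0:ℝ)..t, ζ r ω)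
    (g h : ℝ → ℝ → Ω → ℝ)
    (hgm : Measurable fun q : ℝ × ℝ × Ω => g q.1 q.2.1 q.2.2)
    (hhm : Measurable fun q : ℝ × ℝ × Ω => h q.1 q.2.1 q.2.2)
    (hg : ∀ t ∈ Set.Icc (0:ℝ) T, ProgMeasurable F (g t) ∧ SqInt P T (g t))
    (hh : ∀ t ∈ Set.Icc (0:ℝ) T, ProgMeasurable F (h t) ∧ SqInt P T (h t))
    (hh2 : Integrable (fun q : ℝ × ℝ × Ω => (h q.1 q.2.1 q.2.2)^2)
      ((volume.restrict (Set.Ioc 0 T)).prod ((volume.restrict (Set.Ioc 0 T)).prod P)))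
    (hgrep : ∀ t ∈ Set.Icc (0:ℝ) T,
      ξ t =ᵐ[P] fun ω => (∫ x, ξ t x ∂P) + SI.toFun (g t) T ω)
    (hhrep : ∀ t ∈ Set.Icc (0:ℝ) T,
      ζ t =ᵐ[P] fun ω => (∫ x, ζ t x ∂P) + SI.toFun (h t) T ω) :
    (∀ t ∈ Set.Icc (0:ℝ) T,
      (fun p : ℝ × Ω => g t p.1 p.2)
        =ᵐ[(volume.restrict (Set.Ioc 0 T)).prod P]
          fun p : ℝ × Ω => g 0 p.1 p.2 + ∫ r in (0:ℝ)..t, h r p.1 p.2)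
    ∧ ∃ g' : ℝ → ℝ → Ω → ℝ,
        (∀ᵐ p ∂((volume.restrict (Set.Ioc 0 T)).prod P),
          ContinuousOn (fun t => g' t p.1 p.2) (Set.Icc 0 T))
        ∧ ∀ t ∈ Set.Icc (0:ℝ) T,
            (fun p : ℝ × Ω => g' t p.1 p.2)
              =ᵐ[(volume.restrict (Set.Ioc 0 T)).prod P] fun p : ℝ × Ω => g t p.1 p.2 := by
  classical
  have hT0 : (0:ℝ) ∈ Set.Icc (0:ℝ) T := ⟨le_rfl, hT.le⟩
  set μ := (volume.restrict (Set.Ioc 0 T)).prod P with hμ_def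
  haveI hfinT : IsFiniteMeasure (volume.restrict (Set.Ioc (0:ℝ) T)) := by
    constructor
    rw [Measure.restrict_apply_univ, Real.volume_Ioc]
    exact ENNReal.ofReal_lt_top
  haveI : IsFiniteMeasure μ := by rw [hμ_def]; infer_instance
  have hgm1 : ∀ τ : ℝ, Measurable fun p : ℝ × Ω => g τ p.1 p.2 := fun τ =>
    hgm.comp (measurable_const.prodMk measurable_id)
  have hhm1 : ∀ r : ℝ, Measurable fun p : ℝ × Ω => h r p.1 p.2 := fun r =>
    hhm.comp (measurable_const.prodMk measurable_id)
  have hhsect : ∀ p : ℝ × Ω, Measurable fun r => h r p.1 p.2 := fun p =>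
    hhm.comp (measurable_id.prodMk measurable_const)
  have main : ∀ t ∈ Set.Icc (0:ℝ) T,
      (fun p : ℝ × Ω => g t p.1 p.2) =ᵐ[μ]
        fun p : ℝ × Ω => g 0 p.1 p.2 + ∫ r in (0:ℝ)..t, h r p.1 p.2 := by
    intro t ht
    obtain ⟨ht0, htT⟩ := ht
    have htmem : t ∈ Set.Icc (0:ℝ) T := ⟨ht0, htT⟩
    set ν := volume.restrict (Set.Ioc (0:ℝ) t) with hν_def
    haveI : IsFiniteMeasure ν := by
      constructor
      rw [hν_def, Measure.restrict_apply_univ, Real.volume_Ioc]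
      exact ENNReal.ofReal_lt_top
    have hνsub : ν = (volume.restrict (Set.Ioc (0:ℝ) T)).restrict (Set.Ioc (0:ℝ) t) := by
      rw [hν_def, Measure.restrict_restrict measurableSet_Ioc,
        Set.inter_eq_left.2 (Set.Ioc_subset_Ioc le_rfl htT)]
    have hνP : ν.prod P = μ.restrict (Set.Ioc (0:ℝ) t ×ˢ Set.univ) := by
      rw [hνsub, Measure.restrict_prod_eq_prod_univ, hμ_def]
    have hνμ : ν.prod μ
        = ((volume.restrict (Set.Ioc (0:ℝ) T)).prod μ).restrict (Set.Ioc (0:ℝ) t ×ˢ Set.univ) := by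
      rw [hνsub, Measure.restrict_prod_eq_prod_univ]
    have hζ2t : Integrable (fun q : ℝ × Ω => ζ q.1 q.2 ^ 2) (ν.prod P) := by
      rw [hνP]; exact hζ2.restrict
    have hh2t : Integrable (fun q : ℝ × (ℝ × Ω) => h q.1 q.2.1 q.2.2 ^ 2) (ν.prod μ) := by
      rw [hνμ]; exact hh2.restrict
    set D : ℝ → Ω → ℝ := fun s ω => g t s ω - g 0 s ω with hD_def
    set K : ℝ × Ω → ℝ := fun p => ∫ r, h r p.1 p.2 ∂ν with hK_def
    have hDprog : ProgMeasurable F D := IsStronglyProgressive.sub (hg t htmem).1 (hg 0 hT0).1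
    have hDm : Measurable fun p : ℝ × Ω => D p.1 p.2 := (hgm1 t).sub (hgm1 0)
    have hgm2 : ∀ τ ∈ Set.Icc (0:ℝ) T, MemLp (fun p : ℝ × Ω => g τ p.1 p.2) 2 μ := fun τ hτ =>
      (memLp_two_iff_integrable_sq (hgm1 τ).aestronglyMeasurable).2 (hg τ hτ).2
    have hD2 : Integrable (fun p : ℝ × Ω => (D p.1 p.2)^2) μ :=
      ((hgm2 t htmem).sub (hgm2 0 hT0)).integrable_sq
    have hDsq : SqInt P T D := hD2
    have hKm : Measurable K :=
      (hhm.stronglyMeasurable.integral_prod_left' (μ := ν)).measurable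
    have hK2 : Integrable (fun p : ℝ × Ω => K p ^ 2) μ := by
      have hswap : Integrable (fun q : (ℝ × Ω) × ℝ => h q.2 q.1.1 q.1.2 ^ 2) (μ.prod ν) :=
        hh2t.swap
      have hB : Integrable (fun p : ℝ × Ω => ∫ r, h r p.1 p.2 ^ 2 ∂ν) μ :=
        hswap.integral_prod_left
      have hsect2 : ∀ᵐ p ∂μ, Integrable (fun r => h r p.1 p.2 ^ 2) ν := hh2t.prod_left_ae
      refine Integrable.mono' (hB.const_mul ((ν Set.univ).toReal))
        ((hKm.pow_const 2).aestronglyMeasurable) ?_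
      filter_upwards [hsect2] with p hp
      rw [Real.norm_eq_abs, abs_of_nonneg (sq_nonneg _)]
      exact sq_integral_le (hhsect p).aestronglyMeasurable hp
    have fub : ∀ f : ℝ × Ω → ℝ, AEStronglyMeasurable f μ → Integrable (fun p => f p ^ 2) μ →
        ∫ p, f p * K p ∂μ = ∫ r, (∫ p, f p * h r p.1 p.2 ∂μ) ∂ν := by
      intro f hfm hf2
      have hGint : Integrable (fun q : ℝ × (ℝ × Ω) => f q.2 * h q.1 q.2.1 q.2.2) (ν.prod μ) :=
        integrable_mul_of_sq (aesm_comp_snd hfm) hhm.aestronglyMeasurable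
          (integrable_comp_snd hf2) hh2t
      have hswap : Integrable
          (Function.uncurry fun (p : ℝ × Ω) (r : ℝ) => f p * h r p.1 p.2) (μ.prod ν) :=
        hGint.swap
      have hsw := integral_integral_swap (f := fun (p : ℝ × Ω) (r : ℝ) => f p * h r p.1 p.2) hswap
      rw [← hsw]
      refine integral_congr_ae (Eventually.of_forall fun p => ?_)
      dsimp only
      rw [integral_const_mul]
    have key : ∀ v : ℝ → Ω → ℝ, ProgMeasurable F v → SqInt P T v →
        ∫ p, v p.1 p.2 * K p ∂μ = ∫ p, v p.1 p.2 * D p.1 p.2 ∂μ := by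
      intro v hv hv2
      set Y := SI.toFun v T with hY_def
      have hY : MemLp Y 2 P := SI.sqIntegrable v hv hv2 T
      have hYint : Integrable Y P := hY.integrable one_le_two
      have hvm : AEStronglyMeasurable (fun p : ℝ × Ω => v p.1 p.2) μ := by
        rw [hμ_def]; exact progMeas_aesm T hv
      have EY0 : ∫ ω, Y ω ∂P = 0 := by
        have h1 : ∫ ω, Y ω ∂P = ∫ ω, (P[Y|F 0]) ω ∂P := (integral_condExp (F.le 0)).symm
        rw [h1]
        calc ∫ ω, (P[Y|F 0]) ω ∂P
            = ∫ ω, SI.toFun v 0 ω ∂P :=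
              integral_congr_ae (SI.martingale v hv hv2 0 T le_rfl hT.le le_rfl)
          _ = ∫ _ω, (0:ℝ) ∂P := integral_congr_ae (SI.start v)
          _ = 0 := integral_zero _ _
      have pol : ∀ u : ℝ → Ω → ℝ, ProgMeasurable F u → SqInt P T u →
          ∫ ω, Y ω * SI.toFun u T ω ∂P = ∫ p, v p.1 p.2 * u p.1 p.2 ∂μ := by
        intro u hu hu2
        have hpol := polarization P F w T hT SI u v hu hu2 hv hv2
        calc ∫ ω, Y ω * SI.toFun u T ω ∂P
            = ∫ ω, SI.toFun u T ω * Y ω ∂P :=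
              integral_congr_ae (Eventually.of_forall fun ω => mul_comm _ _)
          _ = ∫ p, u p.1 p.2 * v p.1 p.2 ∂μ := by rw [hμ_def]; exact hpol
          _ = ∫ p, v p.1 p.2 * u p.1 p.2 ∂μ :=
              integral_congr_ae (Eventually.of_forall fun p => mul_comm _ _)
      have EYmul : ∀ τ ∈ Set.Icc (0:ℝ) T, Integrable (fun ω => Y ω * ξ τ ω) P ∧
          ∫ ω, Y ω * ξ τ ω ∂P = ∫ p, v p.1 p.2 * g τ p.1 p.2 ∂μ := by
        intro τ hτ
        have hGτ : MemLp (SI.toFun (g τ) T) 2 P :=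
          SI.sqIntegrable (g τ) (hg τ hτ).1 (hg τ hτ).2 T
        have hmulG : Integrable (fun ω => Y ω * SI.toFun (g τ) T ω) P :=
          integrable_mul_of_sq hY.aestronglyMeasurable hGτ.aestronglyMeasurable
            hY.integrable_sq hGτ.integrable_sq
        have hprodEq : (fun ω => Y ω * ξ τ ω) =ᵐ[P]
            fun ω => Y ω * (∫ x, ξ τ x ∂P) + Y ω * SI.toFun (g τ) T ω := by
          filter_upwards [hgrep τ hτ] with ω hω
          rw [hω]; ring
        have hint2 : Integrable
            (fun ω => Y ω * (∫ x, ξ τ x ∂P) + Y ω * SI.toFun (g τ) T ω) P :=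
          (hYint.mul_const _).add hmulG
        refine ⟨hint2.congr hprodEq.symm, ?_⟩
        rw [integral_congr_ae hprodEq, integral_add (hYint.mul_const _) hmulG,
          integral_mul_const, EY0, zero_mul, zero_add]
        exact pol (g τ) (hg τ hτ).1 (hg τ hτ).2
      have hζrep : ∀ r ∈ Set.Ioc (0:ℝ) t,
          (∫ p, v p.1 p.2 * h r p.1 p.2 ∂μ) = ∫ ω, Y ω * ζ r ω ∂P := by
        intro r hr
        have hrT : r ∈ Set.Icc (0:ℝ) T := ⟨hr.1.le, hr.2.trans htT⟩
        have hHr : MemLp (SI.toFun (h r) T) 2 P :=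
          SI.sqIntegrable (h r) (hh r hrT).1 (hh r hrT).2 T
        have hmulH : Integrable (fun ω => Y ω * SI.toFun (h r) T ω) P :=
          integrable_mul_of_sq hY.aestronglyMeasurable hHr.aestronglyMeasurable
            hY.integrable_sq hHr.integrable_sq
        have e1 : (fun ω => Y ω * ζ r ω) =ᵐ[P]
            fun ω => Y ω * (∫ x, ζ r x ∂P) + Y ω * SI.toFun (h r) T ω := by
          filter_upwards [hhrep r hrT] with ω hω
          rw [hω]; ring
        rw [integral_congr_ae e1, integral_add (hYint.mul_const _) hmulH,
          integral_mul_const, EY0, zero_mul, zero_add]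
        exact (pol (h r) (hh r hrT).1 (hh r hrT).2).symm
      have G2int : Integrable (fun q : ℝ × Ω => Y q.2 * ζ q.1 q.2) (ν.prod P) :=
        integrable_mul_of_sq (aesm_comp_snd hY.aestronglyMeasurable)
          hζm.aestronglyMeasurable (integrable_comp_snd hY.integrable_sq) hζ2t
      have G2int' : Integrable (Function.uncurry fun (r : ℝ) (ω : Ω) => Y ω * ζ r ω)
          (ν.prod P) := G2int
      have swap2 := integral_integral_swap (f := fun (r : ℝ) (ω : Ω) => Y ω * ζ r ω) G2int'
      have hξdiff : ∀ ω : Ω, ∫ r, ζ r ω ∂ν = ξ t ω - ξ 0 ω := by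
        intro ω
        have h2 : ∫ r, ζ r ω ∂ν = ∫ r in (0:ℝ)..t, ζ r ω := by
          rw [intervalIntegral.integral_of_le ht0, hν_def]
        linarith [hξ ω t htmem, h2]
      calc ∫ p, v p.1 p.2 * K p ∂μ
          = ∫ r, (∫ p, v p.1 p.2 * h r p.1 p.2 ∂μ) ∂ν := fub _ hvm hv2
        _ = ∫ r, (∫ ω, Y ω * ζ r ω ∂P) ∂ν := by
            rw [hν_def]
            exact setIntegral_congr_fun measurableSet_Ioc fun r hr => hζrep r hr
        _ = ∫ ω, (∫ r, Y ω * ζ r ω ∂ν) ∂P := swap2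
        _ = ∫ ω, Y ω * (ξ t ω - ξ 0 ω) ∂P := by
            refine integral_congr_ae (Eventually.of_forall fun ω => ?_)
            dsimp only
            rw [integral_const_mul, hξdiff ω]
        _ = (∫ ω, Y ω * ξ t ω ∂P) - ∫ ω, Y ω * ξ 0 ω ∂P := by
            have : (fun ω => Y ω * (ξ t ω - ξ 0 ω))
                = fun ω => Y ω * ξ t ω - Y ω * ξ 0 ω := by
              funext ω; ring
            rw [this, integral_sub (EYmul t htmem).1 (EYmul 0 hT0).1]
        _ = (∫ p, v p.1 p.2 * g t p.1 p.2 ∂μ) - ∫ p, v p.1 p.2 * g 0 p.1 p.2 ∂μ := by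
            rw [(EYmul t htmem).2, (EYmul 0 hT0).2]
        _ = ∫ p, v p.1 p.2 * D p.1 p.2 ∂μ := by
            rw [← integral_sub
              (integrable_mul_of_sq hvm (hgm1 t).aestronglyMeasurable hv2 (hg t htmem).2)
              (integrable_mul_of_sq hvm (hgm1 0).aestronglyMeasurable hv2 (hg 0 hT0).2)]
            refine integral_congr_ae (Eventually.of_forall fun p => ?_)
            simp only [hD_def]; ring
    have e1 : ∫ p, D p.1 p.2 * K p ∂μ = ∫ p, D p.1 p.2 * D p.1 p.2 ∂μ := key D hDprog hDsq
    have e2 : ∫ p, K p * K p ∂μ = ∫ p, D p.1 p.2 * K p ∂μ := by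
      have f1 := fub K hKm.aestronglyMeasurable hK2
      have f2 := fub (fun p : ℝ × Ω => D p.1 p.2) hDm.aestronglyMeasurable hD2
      rw [f1, f2, hν_def]
      refine setIntegral_congr_fun measurableSet_Ioc fun r hr => ?_
      have hrT : r ∈ Set.Icc (0:ℝ) T := ⟨hr.1.le, hr.2.trans htT⟩
      calc ∫ p, K p * h r p.1 p.2 ∂μ
          = ∫ p, h r p.1 p.2 * K p ∂μ :=
            integral_congr_ae (Eventually.of_forall fun p => mul_comm _ _)
        _ = ∫ p, h r p.1 p.2 * D p.1 p.2 ∂μ := key (h r) (hh r hrT).1 (hh r hrT).2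
        _ = ∫ p, D p.1 p.2 * h r p.1 p.2 ∂μ :=
            integral_congr_ae (Eventually.of_forall fun p => mul_comm _ _)
    have intDK : Integrable (fun p : ℝ × Ω => D p.1 p.2 * K p) μ :=
      integrable_mul_of_sq hDm.aestronglyMeasurable hKm.aestronglyMeasurable hD2 hK2
    have intDD : Integrable (fun p : ℝ × Ω => D p.1 p.2 * D p.1 p.2) μ := by
      simpa [pow_two] using hD2
    have intKK : Integrable (fun p : ℝ × Ω => K p * K p) μ := by
      simpa [pow_two] using hK2
    have eexp : (fun p : ℝ × Ω => (D p.1 p.2 - K p)^2)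
        = fun p : ℝ × Ω => (D p.1 p.2 * D p.1 p.2 - 2 * (D p.1 p.2 * K p)) + K p * K p := by
      funext p; ring
    have hint : Integrable (fun p : ℝ × Ω => (D p.1 p.2 - K p)^2) μ := by
      rw [eexp]; exact (intDD.sub (intDK.const_mul 2)).add intKK
    have hzero : ∫ p, (D p.1 p.2 - K p)^2 ∂μ = 0 := by
      have iSub : Integrable (fun p : ℝ × Ω => D p.1 p.2 * D p.1 p.2 - 2 * (D p.1 p.2 * K p)) μ :=
        intDD.sub (intDK.const_mul 2)
      rw [eexp, integral_add iSub intKK, integral_sub intDD (intDK.const_mul 2),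
        integral_const_mul]
      linarith [e1, e2]
    have hae0 := (integral_eq_zero_iff_of_nonneg
      (fun p => sq_nonneg (D p.1 p.2 - K p)) hint).1 hzero
    filter_upwards [hae0] with p hp
    simp only [Pi.zero_apply] at hp
    have hDK : D p.1 p.2 - K p = 0 := by
      have := sq_eq_zero_iff.1 hp
      exact this
    have hKp : K p = ∫ r in (0:ℝ)..t, h r p.1 p.2 := by
      rw [intervalIntegral.integral_of_le ht0, hK_def, hν_def]
    simp only [hD_def] at hDK
    linarith [hDK, hKp]
  refine ⟨main, ⟨fun t' s ω => g 0 s ω + ∫ r in (0:ℝ)..t', h r s ω, ?_, ?_⟩⟩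
  · have hae : ∀ᵐ p ∂μ,
        Integrable (fun r => h r p.1 p.2 ^ 2) (volume.restrict (Set.Ioc (0:ℝ) T)) :=
      hh2.prod_left_ae
    filter_upwards [hae] with p hp
    have hm : Measurable fun r => h r p.1 p.2 :=
      hhm.comp (measurable_id.prodMk measurable_const)
    have hint1 : Integrable (fun r => h r p.1 p.2) (volume.restrict (Set.Ioc (0:ℝ) T)) :=
      integrable_of_sq hm.aestronglyMeasurable hp
    have hIcc : IntegrableOn (fun r => h r p.1 p.2) (Set.Icc (0:ℝ) T) volume := by
      rw [integrableOn_Icc_iff_integrableOn_Ioc]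
      exact hint1
    have hcont := intervalIntegral.continuousOn_primitive_interval
      (a := (0:ℝ)) (b := T) (μ := volume) (f := fun r => h r p.1 p.2)
      (by rwa [Set.uIcc_of_le hT.le])
    rw [Set.uIcc_of_le hT.le] at hcont
    exact continuousOn_const.add hcont
  · intro t' ht'
    exact (main t' ht').symm
end

section
/- Every Fréchet differentiable functional $g: C[0,T]\to\mathbb{R}$ is a pointwise limit of functionals belonging to the class $\mathcal{A}_T$. Specifically, the functionals $g^{(n)}(c) = g(R^{(n)}c)$ with $(R^{(n)}c)_t = e^{-n(T-t)}c_T + n\int_t^T e^{-n(s-t)}c_s\,ds$ belong to $\mathcal{A}_T$ and satisfy $g^{(n)}(c)\to g(c)$ for every $c\in C[0,T]$. -/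
set_option maxHeartbeats 1000000


open MeasureTheory Filter Set

/-- The sup norm `‖z‖ = sup_{s ∈ [0,T]} |z s|` of a path, as used on `C[0,T]`. -/
noncomputable def supNorm (T : ℝ) (z : ℝ → ℝ) : ℝ :=
  ⨆ s : Set.Icc (0:ℝ) T, |z s|

/-- A functional `h` on paths belongs to the class `𝒜_t` at `c`, with vertical part `dh`
(an atom at `t`) and absolutely continuous part `δh`, if its (Fréchet) derivative at `c`
has the form
`h(c+z) = h(c) + dh ⬝ z_t + ∫_0^t δh(s) z_s ds + o(‖z‖)` as `‖z‖ → 0`. -/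
def MemClassA (T t : ℝ) (h : (ℝ → ℝ) → ℝ) (c : ℝ → ℝ) (dh : ℝ) (δh : ℝ → ℝ) : Prop :=
  IntegrableOn δh (Set.Icc 0 t) volume ∧
  ∀ ε > (0:ℝ), ∃ δ > (0:ℝ), ∀ z : ℝ → ℝ, Continuous z →
    (∀ s ∈ Set.Icc (0:ℝ) T, |z s| ≤ δ) →
    |h (fun s => c s + z s) - h c - (dh * z t + ∫ s in (0:ℝ)..t, δh s * z s)|
      ≤ ε * supNorm T z

/-- The smoothing operator
`(R⁽ⁿ⁾c)_t = e^{-n(T-t)} c_T + n ∫_t^T e^{-n(s-t)} c_s ds`. -/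
noncomputable def Rn (T : ℝ) (n : ℕ) (c : ℝ → ℝ) (t : ℝ) : ℝ :=
  Real.exp (-(n : ℝ) * (T - t)) * c T
    + (n : ℝ) * ∫ s in t..T, Real.exp (-(n : ℝ) * (s - t)) * c s

/-- `g` is Fréchet differentiable at `c` (as a functional on `C[0,T]`) with derivative
the signed measure `μ = μp - μn` (Jordan decomposition into two finite measures):
`g(c+z) = g(c) + ∫_{[0,T]} z dμ + o(‖z‖)` as `‖z‖ → 0`. -/
def FrechetDerivAt (T : ℝ) (g : (ℝ → ℝ) → ℝ) (c : ℝ → ℝ)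
    (μp μn : Measure ℝ) : Prop :=
  IsFiniteMeasure μp ∧ IsFiniteMeasure μn ∧
  ∀ ε > (0:ℝ), ∃ δ > (0:ℝ), ∀ z : ℝ → ℝ, Continuous z →
    (∀ s ∈ Set.Icc (0:ℝ) T, |z s| ≤ δ) →
    |g (fun s => c s + z s) - g c
        - ((∫ s in Set.Icc (0:ℝ) T, z s ∂μp) - ∫ s in Set.Icc (0:ℝ) T, z s ∂μn)|
      ≤ ε * supNorm T z

lemma expInt (a t T : ℝ) : a * ∫ s in t..T, Real.exp (-a*(s-t)) = 1 - Real.exp (-a*(T-t)) := by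
  rcases eq_or_ne a 0 with rfl | ha
  · simp
  · have h : ∀ x ∈ uIcc t T, HasDerivAt (fun s => -(a⁻¹) * Real.exp (-a*(s-t)))
        (Real.exp (-a*(x-t))) x := by
      intro x _
      have h1 : HasDerivAt (fun s : ℝ => -a*(s-t)) (-a) x := by
        simpa using (((hasDerivAt_id x).sub_const t).const_mul (-a))
      have h2 := (Real.hasDerivAt_exp (-a*(x-t))).comp x h1
      have h3 := h2.const_mul (-(a⁻¹))
      have e : -a⁻¹ * (Real.exp (-a*(x-t)) * -a) = Real.exp (-a*(x-t)) := by field_simp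
      rw [e] at h3
      exact h3
    have hcont : IntervalIntegrable (fun s => Real.exp (-a*(s-t))) volume t T :=
      (by fun_prop : Continuous fun s => Real.exp (-a*(s-t))).intervalIntegrable t T
    rw [intervalIntegral.integral_eq_sub_of_hasDerivAt h hcont]
    field_simp
    ring_nf
    rw [Real.exp_zero]; ring

lemma Rn_add (T : ℝ) (n : ℕ) (c z : ℝ → ℝ) (hc : Continuous c) (hz : Continuous z) (t : ℝ) :
    Rn T n (fun u => c u + z u) t = Rn T n c t + Rn T n z t := by
  unfold Rn
  have h1 : IntervalIntegrable (fun s => Real.exp (-(n:ℝ)*(s-t)) * c s) volume t T :=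
    (by fun_prop : Continuous fun s => Real.exp (-(n:ℝ)*(s-t)) * c s).intervalIntegrable t T
  have h2 : IntervalIntegrable (fun s => Real.exp (-(n:ℝ)*(s-t)) * z s) volume t T :=
    (by fun_prop : Continuous fun s => Real.exp (-(n:ℝ)*(s-t)) * z s).intervalIntegrable t T
  have : (∫ s in t..T, Real.exp (-(n:ℝ)*(s-t)) * (c s + z s))
      = (∫ s in t..T, Real.exp (-(n:ℝ)*(s-t)) * c s) + ∫ s in t..T, Real.exp (-(n:ℝ)*(s-t)) * z s := by
    rw [← intervalIntegral.integral_add h1 h2]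
    congr 1; funext s; ring
  rw [this]; ring

/-- bound for the integral part of `Rn`. -/
lemma Rn_int_bound (T : ℝ) (hT : 0 ≤ T) (n : ℕ) (z : ℝ → ℝ) (hz : Continuous z) (δ : ℝ)
    (hδ : 0 ≤ δ) (hb : ∀ s ∈ Set.Icc (0:ℝ) T, |z s| ≤ δ) (t : ℝ) (ht : t ∈ Set.Icc (0:ℝ) T) :
    |(n:ℝ) * ∫ s in t..T, Real.exp (-(n:ℝ)*(s-t)) * z s|
      ≤ δ * (1 - Real.exp (-(n:ℝ)*(T-t))) := by
  obtain ⟨ht0, htT⟩ := ht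
  have key : (n:ℝ) * ∫ s in t..T, Real.exp (-(n:ℝ)*(s-t)) = 1 - Real.exp (-(n:ℝ)*(T-t)) :=
    expInt (n:ℝ) t T
  rw [abs_mul, Nat.abs_cast]
  have h1 : |∫ s in t..T, Real.exp (-(n:ℝ)*(s-t)) * z s|
      ≤ ∫ s in t..T, |Real.exp (-(n:ℝ)*(s-t)) * z s| :=
    intervalIntegral.abs_integral_le_integral_abs htT
  have h2 : (∫ s in t..T, |Real.exp (-(n:ℝ)*(s-t)) * z s|)
      ≤ ∫ s in t..T, δ * Real.exp (-(n:ℝ)*(s-t)) := by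
    apply intervalIntegral.integral_mono_on htT
    · exact ((by fun_prop : Continuous fun s => Real.exp (-(n:ℝ)*(s-t)) * z s).abs).intervalIntegrable t T
    · exact ((by fun_prop : Continuous fun s => δ * Real.exp (-(n:ℝ)*(s-t)))).intervalIntegrable t T
    · intro x hx
      rw [abs_mul, abs_of_pos (Real.exp_pos _)]
      rw [mul_comm]
      apply mul_le_mul_of_nonneg_right _ (le_of_lt (Real.exp_pos _))
      exact hb x ⟨le_trans ht0 hx.1, hx.2⟩
  rw [intervalIntegral.integral_const_mul] at h2
  calc (n:ℝ) * |∫ s in t..T, Real.exp (-(n:ℝ)*(s-t)) * z s|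
      ≤ (n:ℝ) * (δ * ∫ s in t..T, Real.exp (-(n:ℝ)*(s-t))) :=
        mul_le_mul_of_nonneg_left (le_trans h1 h2) (Nat.cast_nonneg n)
    _ = δ * ((n:ℝ) * ∫ s in t..T, Real.exp (-(n:ℝ)*(s-t))) := by ring
    _ = δ * (1 - Real.exp (-(n:ℝ)*(T-t))) := by rw [key]

lemma Rn_bound (T : ℝ) (hT : 0 ≤ T) (n : ℕ) (z : ℝ → ℝ) (hz : Continuous z) (δ : ℝ)
    (hb : ∀ s ∈ Set.Icc (0:ℝ) T, |z s| ≤ δ) (t : ℝ) (ht : t ∈ Set.Icc (0:ℝ) T) :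
    |Rn T n z t| ≤ δ := by
  obtain ⟨ht0, htT⟩ := ht
  have hδ : 0 ≤ δ := le_trans (abs_nonneg _) (hb T ⟨hT, le_refl T⟩)
  have he : (0:ℝ) < Real.exp (-(n:ℝ)*(T-t)) := Real.exp_pos _
  have habs := Rn_int_bound T hT n z hz δ hδ hb t ⟨ht0, htT⟩
  calc |Rn T n z t| ≤ |Real.exp (-(n:ℝ)*(T-t)) * z T|
        + |(n:ℝ) * ∫ s in t..T, Real.exp (-(n:ℝ)*(s-t)) * z s| := abs_add_le _ _
    _ ≤ Real.exp (-(n:ℝ)*(T-t)) * δ + δ * (1 - Real.exp (-(n:ℝ)*(T-t))) := by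
        apply add_le_add _ habs
        rw [abs_mul, abs_of_pos he]
        exact mul_le_mul_of_nonneg_left (hb T ⟨hT, le_refl T⟩) (le_of_lt he)
    _ = δ := by ring

lemma cont_integral_piece (a T : ℝ) (z : ℝ → ℝ) (hz : Continuous z) :
    Continuous (fun t => ∫ s in t..T, Real.exp (-a*(s-t)) * z s) := by
  have heq : (fun t => ∫ s in t..T, Real.exp (-a*(s-t)) * z s)
      = fun t => Real.exp (a*t) * ∫ s in t..T, Real.exp (-a*s) * z s := by
    funext t
    rw [← intervalIntegral.integral_const_mul]
    congr 1; funext s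
    rw [← mul_assoc, ← Real.exp_add]
    ring_nf
  rw [heq]
  have hint : ∀ u v : ℝ, IntervalIntegrable (fun s => Real.exp (-a*s) * z s) volume u v :=
    fun u v => (by fun_prop : Continuous fun s => Real.exp (-a*s) * z s).intervalIntegrable u v
  have hc2 : Continuous fun t => ∫ s in t..T, Real.exp (-a*s) * z s := by
    have h := intervalIntegral.continuous_primitive hint T
    have : (fun t => ∫ s in t..T, Real.exp (-a*s) * z s)
        = fun t => -∫ s in T..t, Real.exp (-a*s) * z s := by
      funext t; rw [intervalIntegral.integral_symm]
    rw [this]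
    exact h.neg
  exact (Real.continuous_exp.comp (continuous_const.mul continuous_id)).mul hc2

lemma Rn_continuous (T : ℝ) (n : ℕ) (z : ℝ → ℝ) (hz : Continuous z) :
    Continuous (Rn T n z) := by
  unfold Rn
  apply Continuous.add
  · exact ((Real.continuous_exp.comp (by fun_prop)).mul continuous_const)
  · exact continuous_const.mul (cont_integral_piece (n:ℝ) T z hz)

lemma Rn_sub_self (T : ℝ) (n : ℕ) (c : ℝ → ℝ) (hc : Continuous c) (t : ℝ) :
    Rn T n c t - c t = Real.exp (-(n:ℝ)*(T-t)) * (c T - c t)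
      + (n:ℝ) * ∫ s in t..T, Real.exp (-(n:ℝ)*(s-t)) * (c s - c t) := by
  have h1 : IntervalIntegrable (fun s => Real.exp (-(n:ℝ)*(s-t)) * c s) volume t T :=
    (by fun_prop : Continuous fun s => Real.exp (-(n:ℝ)*(s-t)) * c s).intervalIntegrable t T
  have h2 : IntervalIntegrable (fun s => c t * Real.exp (-(n:ℝ)*(s-t))) volume t T :=
    (by fun_prop : Continuous fun s => c t * Real.exp (-(n:ℝ)*(s-t))).intervalIntegrable t T
  have hsub : (∫ s in t..T, Real.exp (-(n:ℝ)*(s-t)) * (c s - c t))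
      = (∫ s in t..T, Real.exp (-(n:ℝ)*(s-t)) * c s)
        - ∫ s in t..T, c t * Real.exp (-(n:ℝ)*(s-t)) := by
    rw [← intervalIntegral.integral_sub h1 h2]
    congr 1; funext s; ring
  have hc2 : (∫ s in t..T, c t * Real.exp (-(n:ℝ)*(s-t)))
      = c t * ∫ s in t..T, Real.exp (-(n:ℝ)*(s-t)) := intervalIntegral.integral_const_mul _ _
  have key := expInt (n:ℝ) t T
  unfold Rn
  rw [hsub, hc2]
  linear_combination (c t) * key

lemma Rn_unif (T : ℝ) (hT : 0 < T) (c : ℝ → ℝ) (hc : Continuous c) :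
    ∀ ε > (0:ℝ), ∃ N : ℕ, ∀ n ≥ N, ∀ t ∈ Set.Icc (0:ℝ) T, |Rn T n c t - c t| ≤ ε := by
  intro ε hε
  -- bound M
  obtain ⟨C, hC⟩ := isCompact_Icc.exists_bound_of_continuousOn (hc.continuousOn (s := Set.Icc 0 T))
  set M : ℝ := max C 0 with hM
  have hM0 : 0 ≤ M := le_max_right _ _
  have hMb : ∀ t ∈ Set.Icc (0:ℝ) T, |c t| ≤ M := fun t ht => le_trans (hC t ht) (le_max_left _ _)
  -- uniform continuity
  have huc : UniformContinuousOn c (Set.Icc 0 T) :=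
    isCompact_Icc.uniformContinuousOn_of_continuous hc.continuousOn
  rw [Metric.uniformContinuousOn_iff] at huc
  obtain ⟨η, hη, hucη⟩ := huc (ε/4) (by linarith)
  -- choose N
  have htend : Tendsto (fun n : ℕ => Real.exp (-((n:ℝ)/2)*η)) atTop (nhds 0) := by
    apply Real.tendsto_exp_atBot.comp
    have h1 : Tendsto (fun n : ℕ => ((n:ℝ)/2)*η) atTop atTop :=
      Tendsto.atTop_mul_const hη (Tendsto.atTop_div_const two_pos tendsto_natCast_atTop_atTop)
    have h2 := tendsto_neg_atBot_iff.mpr h1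
    convert h2 using 2 with n
    ring
  have hev : ∀ᶠ n : ℕ in atTop, Real.exp (-((n:ℝ)/2)*η) < ε/(12*M+2) := by
    apply htend.eventually_lt_const
    positivity
  obtain ⟨N, hN⟩ := eventually_atTop.mp hev
  refine ⟨N, fun n hn t ht => ?_⟩
  obtain ⟨ht0, htT⟩ := ht
  set a : ℝ := (n:ℝ) with ha
  have ha0 : 0 ≤ a := Nat.cast_nonneg n
  set E : ℝ := Real.exp (-a*(T-t)) with hE
  set eh : ℝ := Real.exp (-(a/2)*η) with heh
  have heh' : eh < ε/(12*M+2) := hN n hn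
  have heh0 : 0 < eh := Real.exp_pos _
  have hE0 : 0 < E := Real.exp_pos _
  have hE1 : E ≤ 1 := Real.exp_le_one_iff.mpr (by nlinarith)
  -- term 1
  have hterm1 : E * |c T - c t| ≤ ε/4 + 2*M*eh := by
    rcases lt_or_ge (T - t) η with hcase | hcase
    · have := hucη T ⟨le_of_lt hT, le_refl T⟩ t ⟨ht0, htT⟩
        (by rw [Real.dist_eq, abs_of_nonneg (by linarith : (0:ℝ) ≤ T - t)]; exact hcase)
      rw [Real.dist_eq] at this
      nlinarith
    · have h2M : |c T - c t| ≤ 2*M := by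
        have := hMb T ⟨le_of_lt hT, le_refl T⟩
        have := hMb t ⟨ht0, htT⟩
        have := abs_sub (c T) (c t)
        calc |c T - c t| ≤ |c T| + |c t| := abs_sub _ _
          _ ≤ 2*M := by linarith [hMb T ⟨le_of_lt hT, le_refl T⟩, hMb t ⟨ht0, htT⟩]
      have hEle : E ≤ eh := by
        apply Real.exp_le_exp.mpr
        nlinarith
      nlinarith
  -- term 2
  set Eh : ℝ := Real.exp (-(a/2)*(T-t)) with hEh
  have hEh1 : Eh ≤ 1 := Real.exp_le_one_iff.mpr (by nlinarith)
  have hφint : (a:ℝ) * ∫ s in t..T, ((ε/4) * Real.exp (-a*(s-t)) + (2*M*eh) * Real.exp (-(a/2)*(s-t)))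
      = (ε/4) * (a * ∫ s in t..T, Real.exp (-a*(s-t)))
        + (2*M*eh) * (2 * ((a/2) * ∫ s in t..T, Real.exp (-(a/2)*(s-t)))) := by
    rw [intervalIntegral.integral_add
      (((by fun_prop : Continuous fun s => (ε/4) * Real.exp (-a*(s-t)))).intervalIntegrable t T)
      (((by fun_prop : Continuous fun s => (2*M*eh) * Real.exp (-(a/2)*(s-t)))).intervalIntegrable t T),
      intervalIntegral.integral_const_mul, intervalIntegral.integral_const_mul]
    ring
  have hpt : ∀ s ∈ Set.Icc t T, |Real.exp (-a*(s-t)) * (c s - c t)|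
      ≤ (ε/4) * Real.exp (-a*(s-t)) + (2*M*eh) * Real.exp (-(a/2)*(s-t)) := by
    intro s hs
    have hs0 : s ∈ Set.Icc (0:ℝ) T := ⟨le_trans ht0 hs.1, hs.2⟩
    have hst : 0 ≤ s - t := by linarith [hs.1]
    rw [abs_mul, abs_of_pos (Real.exp_pos _)]
    rcases lt_or_ge (s - t) η with hcase | hcase
    · have := hucη s hs0 t ⟨ht0, htT⟩
        (by rw [Real.dist_eq, abs_of_nonneg hst]; exact hcase)
      rw [Real.dist_eq] at this
      have h1 : Real.exp (-a*(s-t)) * |c s - c t| ≤ Real.exp (-a*(s-t)) * (ε/4) :=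
        mul_le_mul_of_nonneg_left (le_of_lt this) (le_of_lt (Real.exp_pos _))
      have h2 : (0:ℝ) ≤ (2*M*eh) * Real.exp (-(a/2)*(s-t)) := by positivity
      linarith
    · have h2M : |c s - c t| ≤ 2*M := by
        calc |c s - c t| ≤ |c s| + |c t| := abs_sub _ _
          _ ≤ 2*M := by linarith [hMb s hs0, hMb t ⟨ht0, htT⟩]
      have hsplit : Real.exp (-a*(s-t)) = Real.exp (-(a/2)*(s-t)) * Real.exp (-(a/2)*(s-t)) := by
        rw [← Real.exp_add]; ring_nf
      have hle : Real.exp (-(a/2)*(s-t)) ≤ eh := Real.exp_le_exp.mpr (by nlinarith)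
      have h1 : (0:ℝ) ≤ (ε/4) * Real.exp (-a*(s-t)) := by positivity
      have e1 := Real.exp_pos (-(a/2)*(s-t))
      have key : Real.exp (-a*(s-t)) * |c s - c t| ≤ (2*M*eh) * Real.exp (-(a/2)*(s-t)) := by
        rw [hsplit]
        calc Real.exp (-(a/2)*(s-t)) * Real.exp (-(a/2)*(s-t)) * |c s - c t|
            ≤ Real.exp (-(a/2)*(s-t)) * Real.exp (-(a/2)*(s-t)) * (2*M) :=
              mul_le_mul_of_nonneg_left h2M (by positivity)
          _ ≤ eh * Real.exp (-(a/2)*(s-t)) * (2*M) := by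
              have h9 := mul_le_mul_of_nonneg_right
                (mul_le_mul_of_nonneg_right hle e1.le) (by positivity : (0:ℝ) ≤ 2*M)
              linarith
          _ = (2*M*eh) * Real.exp (-(a/2)*(s-t)) := by ring
      linarith
  have hterm2 : a * |∫ s in t..T, Real.exp (-a*(s-t)) * (c s - c t)| ≤ ε/4 + 4*M*eh := by
    have h1 : |∫ s in t..T, Real.exp (-a*(s-t)) * (c s - c t)|
        ≤ ∫ s in t..T, |Real.exp (-a*(s-t)) * (c s - c t)| :=
      intervalIntegral.abs_integral_le_integral_abs htT
    have h2 : (∫ s in t..T, |Real.exp (-a*(s-t)) * (c s - c t)|)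
        ≤ ∫ s in t..T, ((ε/4) * Real.exp (-a*(s-t)) + (2*M*eh) * Real.exp (-(a/2)*(s-t))) := by
      apply intervalIntegral.integral_mono_on htT
      · exact ((by fun_prop : Continuous fun s => Real.exp (-a*(s-t)) * (c s - c t)).abs).intervalIntegrable t T
      · exact ((by fun_prop : Continuous fun s => (ε/4) * Real.exp (-a*(s-t)) + (2*M*eh) * Real.exp (-(a/2)*(s-t)))).intervalIntegrable t T
      · exact hpt
    have h3 : a * |∫ s in t..T, Real.exp (-a*(s-t)) * (c s - c t)|
        ≤ a * ∫ s in t..T, ((ε/4) * Real.exp (-a*(s-t)) + (2*M*eh) * Real.exp (-(a/2)*(s-t))) :=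
      mul_le_mul_of_nonneg_left (le_trans h1 h2) ha0
    rw [hφint, expInt a t T] at h3
    rw [show (a/2) * ∫ s in t..T, Real.exp (-(a/2)*(s-t)) = 1 - Real.exp (-(a/2)*(T-t)) from expInt (a/2) t T] at h3
    rw [← hEh] at h3
    have b1 : ε/4*(1 - E) ≤ ε/4 := by nlinarith [mul_pos (by linarith : (0:ℝ) < ε/4) hE0]
    have b2 : 2*M*eh*(2*(1-Eh)) ≤ 4*M*eh := by
      nlinarith [mul_nonneg (mul_nonneg hM0 heh0.le) (Real.exp_pos (-(a/2)*(T-t))).le]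
    linarith
  -- combine
  rw [Rn_sub_self T n c hc t]
  have hcomb : |E * (c T - c t) + a * ∫ s in t..T, Real.exp (-a*(s-t)) * (c s - c t)|
      ≤ E * |c T - c t| + a * |∫ s in t..T, Real.exp (-a*(s-t)) * (c s - c t)| := by
    calc _ ≤ |E * (c T - c t)| + |a * ∫ s in t..T, Real.exp (-a*(s-t)) * (c s - c t)| := abs_add_le _ _
      _ = _ := by rw [abs_mul, abs_mul, abs_of_pos hE0, abs_of_nonneg ha0]
  have hfin : 6*M*eh ≤ ε/2 := by
    have h1 : eh * (12*M+2) < ε := (lt_div_iff₀ (by positivity : (0:ℝ) < 12*M+2)).mp heh'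
    nlinarith
  calc |E * (c T - c t) + a * ∫ s in t..T, Real.exp (-a*(s-t)) * (c s - c t)|
      ≤ E * |c T - c t| + a * |∫ s in t..T, Real.exp (-a*(s-t)) * (c s - c t)| := hcomb
    _ ≤ (ε/4 + 2*M*eh) + (ε/4 + 4*M*eh) := add_le_add hterm1 hterm2
    _ ≤ ε := by nlinarith

/-- the density part of the derivative of `g ∘ Rn` coming from measure `μ` -/
noncomputable def deltaA (T : ℝ) (n : ℕ) (μ : Measure ℝ) (s : ℝ) : ℝ :=
  ((n:ℝ) * Real.exp (-(n:ℝ)*s)) * ∫ t in Set.Icc 0 T ∩ Set.Iio s, Real.exp ((n:ℝ)*t) ∂μ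

lemma exp_integrableOn (T : ℝ) (n : ℕ) (μ : Measure ℝ) [IsFiniteMeasure μ] (A : Set ℝ)
    (hA : A ⊆ Set.Icc 0 T) (hAm : MeasurableSet A) :
    IntegrableOn (fun t => Real.exp ((n:ℝ)*t)) A μ := by
  apply Integrable.mono' (integrable_const (Real.exp ((n:ℝ)*T)))
  · exact (by fun_prop : Continuous fun t => Real.exp ((n:ℝ)*t)).aestronglyMeasurable
  · rw [ae_restrict_iff' hAm]
    apply ae_of_all
    intro t ht
    rw [Real.norm_eq_abs, abs_of_pos (Real.exp_pos _)]
    exact Real.exp_le_exp.mpr (mul_le_mul_of_nonneg_left ((hA ht).2) (Nat.cast_nonneg n))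

lemma deltaA_measurable (T : ℝ) (n : ℕ) (μ : Measure ℝ) [IsFiniteMeasure μ] :
    Measurable (deltaA T n μ) := by
  apply Measurable.mul (by fun_prop)
  have hmono : Monotone (fun s => ∫ t in Set.Icc 0 T ∩ Set.Iio s, Real.exp ((n:ℝ)*t) ∂μ) := by
    intro s s' hss
    apply setIntegral_mono_set
    · exact exp_integrableOn T n μ _ inter_subset_left (measurableSet_Icc.inter measurableSet_Iio)
    · exact ae_of_all _ (fun t => (Real.exp_pos _).le)
    · exact HasSubset.Subset.eventuallyLE (inter_subset_inter_right _ (Iio_subset_Iio hss))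
  exact hmono.measurable

lemma deltaA_bound (T : ℝ) (n : ℕ) (μ : Measure ℝ) [IsFiniteMeasure μ] (s : ℝ) (hs : 0 ≤ s) :
    |deltaA T n μ s| ≤ (n:ℝ) * ∫ t in Set.Icc 0 T, Real.exp ((n:ℝ)*t) ∂μ := by
  have h0 : (0:ℝ) ≤ ∫ t in Set.Icc 0 T ∩ Set.Iio s, Real.exp ((n:ℝ)*t) ∂μ :=
    setIntegral_nonneg (measurableSet_Icc.inter measurableSet_Iio) (fun t _ => (Real.exp_pos _).le)
  have h1 : (∫ t in Set.Icc 0 T ∩ Set.Iio s, Real.exp ((n:ℝ)*t) ∂μ)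
      ≤ ∫ t in Set.Icc 0 T, Real.exp ((n:ℝ)*t) ∂μ := by
    apply setIntegral_mono_set
    · exact exp_integrableOn T n μ _ (le_refl _) measurableSet_Icc
    · exact ae_of_all _ (fun t => (Real.exp_pos _).le)
    · exact HasSubset.Subset.eventuallyLE inter_subset_left
  have he : Real.exp (-(n:ℝ)*s) ≤ 1 := Real.exp_le_one_iff.mpr (by nlinarith [Nat.cast_nonneg (α := ℝ) n])
  unfold deltaA
  rw [abs_mul, abs_of_nonneg h0, abs_mul, Nat.abs_cast, abs_of_pos (Real.exp_pos _)]
  have he0 := Real.exp_pos (-(n:ℝ)*s)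
  have k1 : (n:ℝ) * Real.exp (-(n:ℝ)*s) * (∫ t in Set.Icc 0 T ∩ Set.Iio s, Real.exp ((n:ℝ)*t) ∂μ)
      ≤ (n:ℝ) * 1 * (∫ t in Set.Icc 0 T ∩ Set.Iio s, Real.exp ((n:ℝ)*t) ∂μ) :=
    mul_le_mul_of_nonneg_right (mul_le_mul_of_nonneg_left he (Nat.cast_nonneg n)) h0
  have k2 : (n:ℝ) * (∫ t in Set.Icc 0 T ∩ Set.Iio s, Real.exp ((n:ℝ)*t) ∂μ)
      ≤ (n:ℝ) * ∫ t in Set.Icc 0 T, Real.exp ((n:ℝ)*t) ∂μ :=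
    mul_le_mul_of_nonneg_left h1 (Nat.cast_nonneg n)
  linarith

lemma swap_key (T : ℝ) (hT : 0 < T) (n : ℕ) (μ : Measure ℝ) [IsFiniteMeasure μ]
    (z : ℝ → ℝ) (hz : Continuous z) (M : ℝ) (hM0 : 0 ≤ M)
    (hMb : ∀ s ∈ Set.Icc (0:ℝ) T, |z s| ≤ M) :
    ∫ t in Set.Icc (0:ℝ) T, ((n:ℝ) * ∫ s in t..T, Real.exp (-(n:ℝ)*(s-t)) * z s) ∂μ
      = ∫ s in (0:ℝ)..T, deltaA T n μ s * z s := by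
  set S : Set (ℝ × ℝ) := {q : ℝ × ℝ | q.1 < q.2 ∧ q.2 ∈ Set.Icc (0:ℝ) T} with hS
  have hSm : MeasurableSet S :=
    (measurableSet_lt measurable_fst measurable_snd).inter (measurable_snd measurableSet_Icc)
  set G : ℝ × ℝ → ℝ :=
    S.indicator (fun q => (n:ℝ) * Real.exp (-(n:ℝ)*(q.2 - q.1)) * z q.2) with hG
  have hGm : Measurable G :=
    Measurable.indicator (by fun_prop : Continuous fun q : ℝ × ℝ =>
      (n:ℝ) * Real.exp (-(n:ℝ)*(q.2 - q.1)) * z q.2).measurable hSm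
  have hGb : ∀ p : ℝ × ℝ, ‖G p‖ ≤ (n:ℝ) * M := by
    intro p
    rw [Real.norm_eq_abs]
    by_cases hp : p ∈ S
    · rw [hG, Set.indicator_of_mem hp]
      obtain ⟨hp1, hp2⟩ := hp
      have he : Real.exp (-(n:ℝ)*(p.2 - p.1)) ≤ 1 :=
        Real.exp_le_one_iff.mpr (by nlinarith [Nat.cast_nonneg (α := ℝ) n, le_of_lt hp1])
      have hzb := hMb p.2 hp2
      rw [abs_mul, abs_mul, Nat.abs_cast, abs_of_pos (Real.exp_pos _)]
      have he0 := (Real.exp_pos (-(n:ℝ)*(p.2 - p.1))).le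
      calc (n:ℝ) * Real.exp (-(n:ℝ)*(p.2 - p.1)) * |z p.2|
          ≤ (n:ℝ) * 1 * M := by
            apply mul_le_mul _ hzb (abs_nonneg _) (by positivity)
            exact mul_le_mul_of_nonneg_left he (Nat.cast_nonneg n)
        _ = (n:ℝ) * M := by ring
    · rw [hG, Set.indicator_of_notMem hp, abs_zero]
      positivity
  haveI hfin : IsFiniteMeasure (volume.restrict (Set.Ioc (0:ℝ) T)) := by
    constructor
    rw [Measure.restrict_apply_univ, Real.volume_Ioc]
    exact ENNReal.ofReal_lt_top
  have hGint : Integrable G ((μ.restrict (Set.Icc 0 T)).prod (volume.restrict (Set.Ioc 0 T))) :=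
    Integrable.mono' (integrable_const ((n:ℝ) * M)) hGm.aestronglyMeasurable (ae_of_all _ hGb)
  -- Fubini
  have hswap : ∫ t in Set.Icc (0:ℝ) T, (∫ s in Set.Ioc (0:ℝ) T, G (t, s)) ∂μ
      = ∫ s in Set.Ioc (0:ℝ) T, (∫ t in Set.Icc (0:ℝ) T, G (t, s) ∂μ) := by
    apply integral_integral_swap
    convert hGint using 1
    rfl
  -- LHS inner identification
  have hLHS : ∀ t ∈ Set.Icc (0:ℝ) T,
      ((n:ℝ) * ∫ s in t..T, Real.exp (-(n:ℝ)*(s-t)) * z s)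
        = ∫ s in Set.Ioc (0:ℝ) T, G (t, s) := by
    intro t ht
    have step1 : ((n:ℝ) * ∫ s in t..T, Real.exp (-(n:ℝ)*(s-t)) * z s)
        = ∫ s in Set.Ioc t T, (n:ℝ) * (Real.exp (-(n:ℝ)*(s-t)) * z s) := by
      rw [← intervalIntegral.integral_const_mul, intervalIntegral.integral_of_le ht.2]
    have step2 : ∫ s in Set.Ioc (0:ℝ) T, G (t, s)
        = ∫ s in Set.Ioc (0:ℝ) T, Set.indicator (Set.Ioi t)
            (fun s => (n:ℝ) * (Real.exp (-(n:ℝ)*(s-t)) * z s)) s := by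
      apply setIntegral_congr_fun measurableSet_Ioc
      intro s hs
      dsimp only
      have hsIcc : s ∈ Set.Icc (0:ℝ) T := ⟨hs.1.le, hs.2⟩
      by_cases hts : t < s
      · rw [hG, Set.indicator_of_mem (show (t,s) ∈ S from ⟨hts, hsIcc⟩),
          Set.indicator_of_mem (show s ∈ Set.Ioi t from hts)]
        ring
      · rw [hG, Set.indicator_of_notMem (show (t,s) ∉ S from fun h => hts h.1),
          Set.indicator_of_notMem (show s ∉ Set.Ioi t from hts)]
    have step3 : (∫ s in Set.Ioc (0:ℝ) T, Set.indicator (Set.Ioi t)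
            (fun s => (n:ℝ) * (Real.exp (-(n:ℝ)*(s-t)) * z s)) s)
        = ∫ s in Set.Ioc (0:ℝ) T ∩ Set.Ioi t, (n:ℝ) * (Real.exp (-(n:ℝ)*(s-t)) * z s) :=
      setIntegral_indicator measurableSet_Ioi
    have hset : Set.Ioc (0:ℝ) T ∩ Set.Ioi t = Set.Ioc t T := by
      ext s
      constructor
      · rintro ⟨⟨_, h2⟩, h3⟩; exact ⟨h3, h2⟩
      · rintro ⟨h1, h2⟩; exact ⟨⟨lt_of_le_of_lt ht.1 h1, h2⟩, h1⟩
    rw [step1, step2, step3, hset]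
  -- RHS inner identification
  have hRHS : ∀ s ∈ Set.Ioc (0:ℝ) T,
      (∫ t in Set.Icc (0:ℝ) T, G (t, s) ∂μ) = deltaA T n μ s * z s := by
    intro s hs
    have hsIcc : s ∈ Set.Icc (0:ℝ) T := ⟨hs.1.le, hs.2⟩
    have step1 : (∫ t in Set.Icc (0:ℝ) T, G (t, s) ∂μ)
        = ∫ t in Set.Icc (0:ℝ) T, Set.indicator (Set.Iio s)
            (fun t => ((n:ℝ) * Real.exp (-(n:ℝ)*s) * z s) * Real.exp ((n:ℝ)*t)) t ∂μ := by
      apply setIntegral_congr_fun measurableSet_Icc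
      intro t _
      dsimp only
      by_cases hts : t < s
      · rw [hG, Set.indicator_of_mem (show (t,s) ∈ S from ⟨hts, hsIcc⟩),
          Set.indicator_of_mem (show t ∈ Set.Iio s from hts)]
        rw [show -(n:ℝ)*(s-t) = -(n:ℝ)*s + (n:ℝ)*t by ring, Real.exp_add]
        ring
      · rw [hG, Set.indicator_of_notMem (show (t,s) ∉ S from fun h => hts h.1),
          Set.indicator_of_notMem (show t ∉ Set.Iio s from hts)]
    rw [step1, setIntegral_indicator measurableSet_Iio, integral_const_mul]
    unfold deltaA
    ring
  -- put it together
  rw [setIntegral_congr_fun measurableSet_Icc hLHS, hswap,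
    setIntegral_congr_fun measurableSet_Ioc hRHS, intervalIntegral.integral_of_le hT.le]

lemma le_supNorm (T : ℝ) (hT : 0 ≤ T) (z : ℝ → ℝ) (hz : Continuous z) (s : ℝ)
    (hs : s ∈ Set.Icc (0:ℝ) T) : |z s| ≤ supNorm T z := by
  have hbdd : BddAbove (Set.range fun p : Set.Icc (0:ℝ) T => |z (p:ℝ)|) := by
    obtain ⟨C, hC⟩ := isCompact_Icc.exists_bound_of_continuousOn
      (hz.continuousOn : ContinuousOn z (Set.Icc (0:ℝ) T))
    refine ⟨C, ?_⟩
    rintro y ⟨p, rfl⟩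
    exact hC p p.2
  exact le_ciSup hbdd ⟨s, hs⟩

lemma supNorm_Rn_le (T : ℝ) (hT : 0 ≤ T) (n : ℕ) (z : ℝ → ℝ) (hz : Continuous z) :
    supNorm T (Rn T n z) ≤ supNorm T z := by
  haveI : Nonempty (Set.Icc (0:ℝ) T) := ⟨⟨0, le_refl 0, hT⟩⟩
  apply ciSup_le
  intro p
  exact Rn_bound T hT n z hz (supNorm T z) (fun s hs => le_supNorm T hT z hz s hs) p p.2

lemma supNorm_le (T : ℝ) (hT : 0 ≤ T) (z : ℝ → ℝ) (δ : ℝ)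
    (hb : ∀ s ∈ Set.Icc (0:ℝ) T, |z s| ≤ δ) : supNorm T z ≤ δ := by
  haveI : Nonempty (Set.Icc (0:ℝ) T) := ⟨⟨0, le_refl 0, hT⟩⟩
  exact ciSup_le fun p => hb p p.2

lemma integrableOn_of_bound (f : ℝ → ℝ) (A : Set ℝ) (hA : MeasurableSet A)
    [IsFiniteMeasure (volume.restrict A)]
    (hfm : AEStronglyMeasurable f (volume.restrict A)) (C : ℝ)
    (hb : ∀ s ∈ A, |f s| ≤ C) : IntegrableOn f A volume :=
  Integrable.mono' (integrable_const C) hfm ((ae_restrict_iff' hA).mpr (ae_of_all _ hb))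

lemma finite_restrict_Icc (a b : ℝ) : IsFiniteMeasure (volume.restrict (Set.Icc a b)) := by
  constructor
  rw [Measure.restrict_apply_univ, Real.volume_Icc]
  exact ENNReal.ofReal_lt_top

lemma finite_restrict_Ioc (a b : ℝ) : IsFiniteMeasure (volume.restrict (Set.Ioc a b)) := by
  constructor
  rw [Measure.restrict_apply_univ, Real.volume_Ioc]
  exact ENNReal.ofReal_lt_top

lemma deltaA_integrableOn_Icc (T : ℝ) (hT : 0 ≤ T) (n : ℕ) (μ : Measure ℝ) [IsFiniteMeasure μ] :
    IntegrableOn (deltaA T n μ) (Set.Icc 0 T) volume := by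
  haveI := finite_restrict_Icc (0:ℝ) T
  apply integrableOn_of_bound _ _ measurableSet_Icc
    (deltaA_measurable T n μ).aestronglyMeasurable
    ((n:ℝ) * ∫ t in Set.Icc 0 T, Real.exp ((n:ℝ)*t) ∂μ)
  intro s hs
  exact deltaA_bound T n μ s hs.1

lemma deltaA_mul_intervalIntegrable (T : ℝ) (hT : 0 ≤ T) (n : ℕ) (μ : Measure ℝ)
    [IsFiniteMeasure μ] (z : ℝ → ℝ) (hz : Continuous z) (M : ℝ) (hM0 : 0 ≤ M)
    (hMb : ∀ s ∈ Set.Icc (0:ℝ) T, |z s| ≤ M) :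
    IntervalIntegrable (fun s => deltaA T n μ s * z s) volume 0 T := by
  rw [intervalIntegrable_iff_integrableOn_Ioc_of_le hT]
  haveI := finite_restrict_Ioc (0:ℝ) T
  set C : ℝ := (n:ℝ) * ∫ t in Set.Icc 0 T, Real.exp ((n:ℝ)*t) ∂μ with hC
  have hC0 : 0 ≤ C := by
    apply mul_nonneg (Nat.cast_nonneg n)
    exact setIntegral_nonneg measurableSet_Icc (fun t _ => (Real.exp_pos _).le)
  apply integrableOn_of_bound _ _ measurableSet_Ioc
    ((deltaA_measurable T n μ).mul hz.measurable).aestronglyMeasurable (C * M)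
  intro s hs
  rw [Pi.mul_apply, abs_mul]
  exact mul_le_mul (deltaA_bound T n μ s hs.1.le) (hMb s ⟨hs.1.le, hs.2⟩) (abs_nonneg _) hC0

/-- splitting of the linear functional: the key identity. -/
lemma linear_split (T : ℝ) (hT : 0 < T) (n : ℕ) (μ : Measure ℝ) [IsFiniteMeasure μ]
    (z : ℝ → ℝ) (hz : Continuous z) (M : ℝ) (hM0 : 0 ≤ M)
    (hMb : ∀ s ∈ Set.Icc (0:ℝ) T, |z s| ≤ M) :
    ∫ t in Set.Icc (0:ℝ) T, Rn T n z t ∂μ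
      = (∫ t in Set.Icc (0:ℝ) T, Real.exp (-(n:ℝ)*(T-t)) ∂μ) * z T
        + ∫ s in (0:ℝ)..T, deltaA T n μ s * z s := by
  have hint1 : Integrable (fun t => Real.exp (-(n:ℝ)*(T-t)) * z T) (μ.restrict (Set.Icc 0 T)) := by
    apply Integrable.mono' (integrable_const |z T|)
      (by fun_prop : Continuous fun t => Real.exp (-(n:ℝ)*(T-t)) * z T).aestronglyMeasurable
    rw [ae_restrict_iff' measurableSet_Icc]
    apply ae_of_all
    intro t ht
    rw [Real.norm_eq_abs, abs_mul, abs_of_pos (Real.exp_pos _)]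
    have he : Real.exp (-(n:ℝ)*(T-t)) ≤ 1 := by
      apply Real.exp_le_one_iff.mpr
      nlinarith [Nat.cast_nonneg (α := ℝ) n, ht.2]
    nlinarith [abs_nonneg (z T)]
  have hint2 : Integrable (fun t => (n:ℝ) * ∫ s in t..T, Real.exp (-(n:ℝ)*(s-t)) * z s)
      (μ.restrict (Set.Icc 0 T)) := by
    apply Integrable.mono' (integrable_const M)
      (continuous_const.mul (cont_integral_piece (n:ℝ) T z hz)).aestronglyMeasurable
    rw [ae_restrict_iff' measurableSet_Icc]
    apply ae_of_all
    intro t ht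
    simp only [Real.norm_eq_abs, Pi.mul_apply]
    have h := Rn_int_bound T hT.le n z hz M hM0 hMb t ht
    nlinarith [Real.exp_pos (-(n:ℝ)*(T-t))]
  have : ∫ t in Set.Icc (0:ℝ) T, Rn T n z t ∂μ
      = (∫ t in Set.Icc (0:ℝ) T, Real.exp (-(n:ℝ)*(T-t)) * z T ∂μ)
        + ∫ t in Set.Icc (0:ℝ) T, ((n:ℝ) * ∫ s in t..T, Real.exp (-(n:ℝ)*(s-t)) * z s) ∂μ := by
    rw [← integral_add hint1 hint2]
    rfl
  rw [this, integral_mul_const, swap_key T hT n μ z hz M hM0 hMb]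
/-- Every Fréchet differentiable functional `g : C[0,T] → ℝ` is a
pointwise limit of functionals of class `𝒜_T`: the functionals `g⁽ⁿ⁾(c) = g(R⁽ⁿ⁾c)`
belong to `𝒜_T` (at every continuous `c`) and `g⁽ⁿ⁾(c) → g(c)` for every
`c ∈ C[0,T]`. -/
theorem classA_functionals_dense
    (T : ℝ) (hT : 0 < T) (g : (ℝ → ℝ) → ℝ)
    (hg : ∀ c : ℝ → ℝ, Continuous c → ∃ μp μn : Measure ℝ, FrechetDerivAt T g c μp μn) :
    ∀ c : ℝ → ℝ, Continuous c →
      Filter.Tendsto (fun n : ℕ => g fun u => Rn T n c u) Filter.atTop (nhds (g c))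
      ∧ ∀ n : ℕ, ∃ (d : ℝ) (δf : ℝ → ℝ),
          MemClassA T T (fun x => g fun u => Rn T n x u) c d δf := by

  intro c hc
  constructor
  · -- Part 1 : convergence
    obtain ⟨μp, μn, hfp, hfn, hF⟩ := hg c hc
    haveI := hfp; haveI := hfn
    rw [Metric.tendsto_atTop]
    intro ε hε
    obtain ⟨δ, hδ, hFδ⟩ := hF 1 one_pos
    set K : ℝ := 1 + (μp (Set.Icc 0 T)).toReal + (μn (Set.Icc 0 T)).toReal with hK
    have hK0 : 0 < K := by positivity
    have hδ' : 0 < min δ (ε/(2*K)) := lt_min hδ (by positivity)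
    obtain ⟨N, hN⟩ := Rn_unif T hT c hc (min δ (ε/(2*K))) hδ'
    refine ⟨N, fun n hn => ?_⟩
    set z : ℝ → ℝ := fun t => Rn T n c t - c t with hz
    have hzc : Continuous z := (Rn_continuous T n c hc).sub hc
    have hzb : ∀ s ∈ Set.Icc (0:ℝ) T, |z s| ≤ min δ (ε/(2*K)) := hN n hn
    have key := hFδ z hzc (fun s hs => le_trans (hzb s hs) (min_le_left _ _))
    have harg : (fun s => c s + z s) = fun u => Rn T n c u := by
      funext s; simp [hz]
    rw [harg] at key
    have hsup : supNorm T z ≤ ε/(2*K) :=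
      supNorm_le T hT.le z _ (fun s hs => le_trans (hzb s hs) (min_le_right _ _))
    have hip : |∫ s in Set.Icc (0:ℝ) T, z s ∂μp| ≤ (ε/(2*K)) * (μp (Set.Icc 0 T)).toReal := by
      have := norm_integral_le_of_norm_le_const (μ := μp.restrict (Set.Icc 0 T))
        (f := z) (C := ε/(2*K)) ?_
      · rwa [measureReal_restrict_apply_univ, measureReal_def, Real.norm_eq_abs] at this
      · rw [ae_restrict_iff' measurableSet_Icc]
        exact ae_of_all _ fun s hs => le_trans (hzb s hs) (min_le_right _ _)
    have hin : |∫ s in Set.Icc (0:ℝ) T, z s ∂μn| ≤ (ε/(2*K)) * (μn (Set.Icc 0 T)).toReal := by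
      have := norm_integral_le_of_norm_le_const (μ := μn.restrict (Set.Icc 0 T))
        (f := z) (C := ε/(2*K)) ?_
      · rwa [measureReal_restrict_apply_univ, measureReal_def, Real.norm_eq_abs] at this
      · rw [ae_restrict_iff' measurableSet_Icc]
        exact ae_of_all _ fun s hs => le_trans (hzb s hs) (min_le_right _ _)
    rw [Real.dist_eq]
    have habs := abs_sub_abs_le_abs_sub (g (fun u => Rn T n c u) - g c)
      ((∫ s in Set.Icc (0:ℝ) T, z s ∂μp) - ∫ s in Set.Icc (0:ℝ) T, z s ∂μn)
    have htri : |g (fun u => Rn T n c u) - g c|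
        ≤ |g (fun u => Rn T n c u) - g c
            - ((∫ s in Set.Icc (0:ℝ) T, z s ∂μp) - ∫ s in Set.Icc (0:ℝ) T, z s ∂μn)|
          + |∫ s in Set.Icc (0:ℝ) T, z s ∂μp| + |∫ s in Set.Icc (0:ℝ) T, z s ∂μn| := by
      have h1 := abs_sub (∫ s in Set.Icc (0:ℝ) T, z s ∂μp) (∫ s in Set.Icc (0:ℝ) T, z s ∂μn)
      have h2 := abs_add_le (g (fun u => Rn T n c u) - g c
          - ((∫ s in Set.Icc (0:ℝ) T, z s ∂μp) - ∫ s in Set.Icc (0:ℝ) T, z s ∂μn))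
        ((∫ s in Set.Icc (0:ℝ) T, z s ∂μp) - ∫ s in Set.Icc (0:ℝ) T, z s ∂μn)
      simp only [sub_add_cancel] at h2
      linarith
    have hKsum : (ε/(2*K)) + (ε/(2*K)) * (μp (Set.Icc 0 T)).toReal
        + (ε/(2*K)) * (μn (Set.Icc 0 T)).toReal = ε/2 := by
      field_simp
      ring
    calc |g (fun u => Rn T n c u) - g c|
        ≤ |g (fun u => Rn T n c u) - g c
            - ((∫ s in Set.Icc (0:ℝ) T, z s ∂μp) - ∫ s in Set.Icc (0:ℝ) T, z s ∂μn)|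
          + |∫ s in Set.Icc (0:ℝ) T, z s ∂μp| + |∫ s in Set.Icc (0:ℝ) T, z s ∂μn| := htri
      _ ≤ 1 * supNorm T z + (ε/(2*K)) * (μp (Set.Icc 0 T)).toReal
          + (ε/(2*K)) * (μn (Set.Icc 0 T)).toReal := by
          apply add_le_add (add_le_add key hip) hin
      _ ≤ ε/2 := by rw [← hKsum]; linarith
      _ < ε := by linarith
  · -- Part 2 : membership in class A
    intro n
    have hRc : Continuous fun u => Rn T n c u := Rn_continuous T n c hc
    obtain ⟨μp, μn, hfp, hfn, hF⟩ := hg (fun u => Rn T n c u) hRc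
    haveI := hfp; haveI := hfn
    refine ⟨(∫ t in Set.Icc (0:ℝ) T, Real.exp (-(n:ℝ)*(T-t)) ∂μp)
        - ∫ t in Set.Icc (0:ℝ) T, Real.exp (-(n:ℝ)*(T-t)) ∂μn,
      fun s => deltaA T n μp s - deltaA T n μn s, ?_, ?_⟩
    · exact (deltaA_integrableOn_Icc T hT.le n μp).sub (deltaA_integrableOn_Icc T hT.le n μn)
    · intro ε hε
      obtain ⟨δ, hδ, hFδ⟩ := hF ε hε
      refine ⟨δ, hδ, ?_⟩
      intro z hzc hzb
      -- bound for z
      obtain ⟨C, hC⟩ := isCompact_Icc.exists_bound_of_continuousOn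
        (hzc.continuousOn : ContinuousOn z (Set.Icc (0:ℝ) T))
      set M : ℝ := max C 0 with hM
      have hM0 : 0 ≤ M := le_max_right _ _
      have hMb : ∀ s ∈ Set.Icc (0:ℝ) T, |z s| ≤ M :=
        fun s hs => le_trans (hC s hs) (le_max_left _ _)
      have hwc : Continuous (Rn T n z) := Rn_continuous T n z hzc
      have hwb : ∀ s ∈ Set.Icc (0:ℝ) T, |Rn T n z s| ≤ δ :=
        fun s hs => Rn_bound T hT.le n z hzc δ hzb s hs
      have key := hFδ (Rn T n z) hwc hwb
      have harg : (fun s => Rn T n c s + Rn T n z s)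
          = fun u => Rn T n (fun s => c s + z s) u := by
        funext u
        exact (Rn_add T n c z hc hzc u).symm
      rw [harg] at key
      have hsplit : (∫ t in Set.Icc (0:ℝ) T, Rn T n z t ∂μp)
            - ∫ t in Set.Icc (0:ℝ) T, Rn T n z t ∂μn
          = ((∫ t in Set.Icc (0:ℝ) T, Real.exp (-(n:ℝ)*(T-t)) ∂μp)
              - ∫ t in Set.Icc (0:ℝ) T, Real.exp (-(n:ℝ)*(T-t)) ∂μn) * z T
            + ∫ s in (0:ℝ)..T, (deltaA T n μp s - deltaA T n μn s) * z s := by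
        rw [linear_split T hT n μp z hzc M hM0 hMb, linear_split T hT n μn z hzc M hM0 hMb]
        have hsub : (∫ s in (0:ℝ)..T, (deltaA T n μp s - deltaA T n μn s) * z s)
            = (∫ s in (0:ℝ)..T, deltaA T n μp s * z s)
              - ∫ s in (0:ℝ)..T, deltaA T n μn s * z s := by
          rw [← intervalIntegral.integral_sub
            (deltaA_mul_intervalIntegrable T hT.le n μp z hzc M hM0 hMb)
            (deltaA_mul_intervalIntegrable T hT.le n μn z hzc M hM0 hMb)]
          congr 1; funext s; ring
        rw [hsub]
        ring
      rw [hsplit] at key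
      have hsup : supNorm T (Rn T n z) ≤ supNorm T z := supNorm_Rn_le T hT.le n z hzc
      calc |g (fun u => Rn T n (fun s => c s + z s) u) - g (fun u => Rn T n c u)
            - (((∫ t in Set.Icc (0:ℝ) T, Real.exp (-(n:ℝ)*(T-t)) ∂μp)
                - ∫ t in Set.Icc (0:ℝ) T, Real.exp (-(n:ℝ)*(T-t)) ∂μn) * z T
              + ∫ s in (0:ℝ)..T, (deltaA T n μp s - deltaA T n μn s) * z s)|
          ≤ ε * supNorm T (Rn T n z) := key
        _ ≤ ε * supNorm T z := mul_le_mul_of_nonneg_left hsup hε.le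
end
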